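/- Under the uniform complementary-label assumption, for the one-versus-all style loss, the ordinary classification risk can be written as R(g) = (C-1)·E_{p(x,ȳ)}[ L̄(g(x), ȳ) ] + M for a constant M independent of g, where L̄(g(x), ȳ) is defined from the ordinary loss by L̄(g(x), ȳ) = -L(g(x), ȳ) up to additive constants. Formally: if for each x, Σ_{y=1}^C L(g(x), y) = K is a constant independent of g and x, then E_{p(x,y)}[L(g(x),y)] = K - (C-1) E_{p(x,ȳ)}[L(g(x), ȳ)], where p(ȳ|y) is uniform over {1,...,C}\{y}. -/

import Mathlib

open Finset

/-- Unbiased risk rewriting under the uniform complementary-label assumption: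
if the loss satisfies the symmetric condition `∑_{y} L x y = K` for all `x`, then
the ordinary risk equals `K - (C-1)` times the complementary risk, where the
complementary label given `Y = y` is uniform on the `C-1` labels `≠ y`. -/
theorem uniform_complementary_risk_identity
    {X : Type*} [Fintype X] (C : ℕ) (hC : 2 ≤ C)
    (p : X → Fin C → ℝ)           -- joint pmf of (X, Y)
    (hp0 : ∀ x y, 0 ≤ p x y) (hp1 : ∑ x, ∑ y, p x y = 1)
    (L : X → Fin C → ℝ)           -- loss x ↦ L(g(x), ·) for a fixed predictor g
    (K : ℝ) (hL : ∀ x, ∑ y, L x y = K) :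
    ∑ x, ∑ y, p x y * L x y
      = K - ((C : ℝ) - 1) *
          ∑ x, ∑ ybar, (∑ y, p x y * (if ybar = y then 0 else 1 / ((C : ℝ) - 1)))
            * L x ybar := by
  have hc : ((C : ℝ) - 1) ≠ 0 := by
    have : (2 : ℝ) ≤ (C : ℝ) := by exact_mod_cast hC
    linarith
  have key : ∀ x : X, ∑ ybar, (∑ y, p x y * (if ybar = y then 0 else 1 / ((C : ℝ) - 1)))
      * L x ybar = (∑ y, p x y * (K - L x y)) / ((C : ℝ) - 1) := by
    intro x
    simp_rw [Finset.sum_mul]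
    rw [Finset.sum_comm, Finset.sum_div]
    refine Finset.sum_congr rfl fun y _ => ?_
    have h1 : ∀ ybar : Fin C,
        p x y * (if ybar = y then 0 else 1 / ((C : ℝ) - 1)) * L x ybar
          = p x y * (1 / ((C : ℝ) - 1)) * L x ybar
            - (if ybar = y then p x y * (1 / ((C : ℝ) - 1)) * L x ybar else 0) := by
      intro ybar
      by_cases h : ybar = y <;> simp [h]
    simp_rw [h1]
    rw [Finset.sum_sub_distrib, Finset.sum_ite_eq', if_pos (Finset.mem_univ y),
      ← Finset.mul_sum, hL]
    field_simp
  simp_rw [key]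
  rw [← Finset.sum_div]
  have : ∑ x, ∑ y, p x y * (K - L x y) = K - ∑ x, ∑ y, p x y * L x y := by
    simp_rw [mul_sub, Finset.sum_sub_distrib, ← Finset.sum_mul]
    rw [hp1, one_mul]
  rw [this]
  field_simp
  ring
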